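/- Let A(x) := Σ_{n≥0} (−1)^n · p^{n²}·y^{2n}/(p;p)_n · x^n ∈ ℚ(p,y)[[x]]. For n ≥ 0 let c_n(p) := Σ_μ p^{Area(μ)}, where the sum is over all Dyck words μ of size n and Area(μ) := Σ_{i=1}^{n}(i − 1 − d_i(μ)) with d_i(μ) the number of D's preceding the i-th U in μ. Then A(x) · Σ_{n≥0} (p·x·y²)^n · c_n(p) · x^0 = A(p·x); that is, the ratio A(p·x)/A(x) equals Σ_{n≥0} (p·x·y²)^n Σ_{μ ∈ D_n} p^{Area(μ)}, the area generating function of Dyck paths. -/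

import Mathlib

attribute [local instance] Classical.propDecidable

/-- The field `ℚ(p,y)`, realized as rational functions in `y` over `ℚ(p)`. -/
abbrev K2 : Type := RatFunc (RatFunc ℚ)

/-- The variable `p` of `ℚ(p,y)`. -/
noncomputable def pv : K2 := RatFunc.C RatFunc.X

/-- The variable `y` of `ℚ(p,y)`. -/
noncomputable def yv : K2 := RatFunc.X

/-- `A(x) = Σ_{n≥0} (-1)^n p^{n²} y^{2n} / (p;p)_n · x^n ∈ ℚ(p,y)[[x]]`. -/
noncomputable def Aser : PowerSeries K2 :=
  PowerSeries.mk fun n =>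
    (-1 : K2) ^ n * pv ^ (n ^ 2) * yv ^ (2 * n) /
      ∏ i ∈ Finset.range n, (1 - pv ^ (i + 1))

/-- A word `w` (with `true = U`, `false = D`) satisfies the ballot condition: every
prefix contains at least as many `U`'s as `D`'s. -/
def prefixCond (L : ℕ) (w : Fin L → Bool) : Prop :=
  ∀ m ∈ Finset.range (L + 1),
    (Finset.univ.filter (fun j : Fin L => (j : ℕ) < m ∧ w j = false)).card ≤
      (Finset.univ.filter (fun j : Fin L => (j : ℕ) < m ∧ w j = true)).card

/-- A Dyck word of size `n`: a word of length `2n` with exactly `n` `U`'s such that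
every prefix has at least as many `U`'s as `D`'s. -/
def isDyck (n : ℕ) (w : Fin (2 * n) → Bool) : Prop :=
  (Finset.univ.filter (fun j => w j = true)).card = n ∧ prefixCond (2 * n) w

/-- `d_i(w)`, the number of `D`'s preceding the `i`-th `U` in `w` (1-indexed `i`). -/
def dCount (n : ℕ) (w : Fin (2 * n) → Bool) (i : ℕ) : ℕ :=
  (Finset.univ.filter (fun j : Fin (2 * n) => w j = false ∧
    (Finset.univ.filter
      (fun j' : Fin (2 * n) => (j' : ℕ) < (j : ℕ) ∧ w j' = true)).card < i)).card

/-- `Area(w) = Σ_{i=1}^{n} (i - 1 - d_i(w))`. -/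
def area (n : ℕ) (w : Fin (2 * n) → Bool) : ℕ :=
  ∑ i ∈ Finset.Icc 1 n, (i - 1 - dCount n w i)

/-- `c_n(p) = Σ_{μ ∈ D_n} p^{Area(μ)}`, the area generating polynomial of Dyck words
of size `n`. -/
noncomputable def dyckArea (n : ℕ) : K2 :=
  ∑ w ∈ Finset.univ.filter (fun w : Fin (2 * n) → Bool => isDyck n w),
    pv ^ area n w

def pOK (l : List Bool) : Prop := ∀ m : ℕ, ((l.take m).count false) ≤ ((l.take m).count true)

def dyckL (l : List Bool) : Prop := l.count true = l.count false ∧ pOK l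

def invL : List Bool → ℕ
  | [] => 0
  | b :: t => invL t + (if b then t.count false else 0)

def gg (k : ℕ) : ℕ := ∑ i ∈ Finset.range (k+1), i

def al (l : List Bool) : ℕ := invL l - gg (l.count true)

lemma gg_two_mul (k : ℕ) : 2 * gg k = k * (k+1) := by
  have := Finset.sum_range_id_mul_two (k+1)
  rw [Nat.add_sub_cancel, Nat.mul_comm (k+1) k] at this
  unfold gg
  omega

lemma gg_add (b e : ℕ) : gg (b + e + 1) = gg b + gg e + b*e + b + e + 1 := by
  have h1 := gg_two_mul (b+e+1)
  have h2 := gg_two_mul b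
  have h3 := gg_two_mul e
  have : (b+e+1) * ((b+e+1)+1) = b*(b+1) + e*(e+1) + 2*(b*e) + 2*b + 2*e + 2 := by ring
  omega

lemma length_eq_counts (l : List Bool) : l.length = l.count true + l.count false := by
  induction l with
  | nil => simp
  | cons b t ih =>
      simp only [List.length_cons, List.count_cons, ih]
      cases b <;> simp <;> omega

lemma invL_append (l1 l2 : List Bool) :
    invL (l1 ++ l2) = invL l1 + invL l2 + l1.count true * l2.count false := by
  induction l1 with
  | nil => simp [invL]
  | cons b t ih =>
      simp only [List.cons_append, invL, ih, List.count_append, List.count_cons]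
      cases b <;> simp [ih] <;> ring

lemma count_take_ofFn {L : ℕ} (w : Fin L → Bool) (b : Bool) :
    ∀ m : ℕ, m ≤ L →
      (((List.ofFn w).take m).count b) =
        (Finset.univ.filter (fun j : Fin L => (j : ℕ) < m ∧ w j = b)).card := by
  intro m
  induction m with
  | zero => intro _; simp
  | succ m ih =>
      intro hm
      have hmL : m < L := hm
      have h1 : (List.ofFn w).take (m+1) = (List.ofFn w).take m ++ [w ⟨m, hmL⟩] := by
        rw [List.take_succ]
        simp [List.getElem?_ofFn, List.ofFnNthVal, hmL]
      rw [h1, List.count_append]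
      rw [ih (le_of_lt hmL)]
      have h2 : (Finset.univ.filter (fun j : Fin L => (j : ℕ) < m + 1 ∧ w j = b))
          = (Finset.univ.filter (fun j : Fin L => (j : ℕ) < m ∧ w j = b)) ∪
            (Finset.univ.filter (fun j : Fin L => (j : ℕ) = m ∧ w j = b)) := by
        rw [← Finset.filter_or]
        apply Finset.filter_congr
        intro j _
        constructor
        · rintro ⟨h, hb⟩
          rcases Nat.lt_succ_iff_lt_or_eq.1 h with h' | h'
          · exact Or.inl ⟨h', hb⟩
          · exact Or.inr ⟨h', hb⟩
        · rintro (⟨h, hb⟩ | ⟨h, hb⟩)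
          · exact ⟨Nat.lt_succ_of_lt h, hb⟩
          · exact ⟨by omega, hb⟩
      have hdisj : Disjoint (Finset.univ.filter (fun j : Fin L => (j : ℕ) < m ∧ w j = b))
          (Finset.univ.filter (fun j : Fin L => (j : ℕ) = m ∧ w j = b)) := by
        rw [Finset.disjoint_filter]
        rintro j _ ⟨h, _⟩ ⟨h', _⟩
        omega
      rw [h2, Finset.card_union_of_disjoint hdisj]
      congr 1
      have h3 : (Finset.univ.filter (fun j : Fin L => (j : ℕ) = m ∧ w j = b))
          = if w ⟨m, hmL⟩ = b then {(⟨m, hmL⟩ : Fin L)} else ∅ := by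
        ext j
        simp only [Finset.mem_filter, Finset.mem_univ, true_and]
        split_ifs with h
        · simp only [Finset.mem_singleton]
          constructor
          · rintro ⟨hj, hb⟩; exact Fin.ext hj
          · rintro rfl; exact ⟨rfl, h⟩
        · simp only [Finset.notMem_empty, iff_false]
          rintro ⟨hj, hb⟩
          exact h (by cases (Fin.ext hj : j = ⟨m, hmL⟩); exact hb)
      rw [h3]
      split_ifs with h <;> simp [h, List.count_singleton']

lemma sum_ite_add {s : Finset ℕ} (c : ℕ → Prop) [DecidablePred c] (f g : ℕ → ℕ) :
    (∑ j ∈ s, if c j then f j + g j else 0)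
      = (∑ j ∈ s, if c j then f j else 0) + (∑ j ∈ s, if c j then g j else 0) := by
  rw [← Finset.sum_add_distrib]
  apply Finset.sum_congr rfl
  intro j _
  split_ifs <;> simp

lemma count_false_eq_sum (l : List Bool) :
    l.count false = ∑ i ∈ Finset.range l.length, (if l.getD i true = false then 1 else 0) := by
  induction l with
  | nil => simp
  | cons b t ih =>
      rw [List.length_cons, Finset.sum_range_succ']
      simp only [List.getD_cons_succ, List.getD_cons_zero, List.count_cons, ← ih]
      cases b <;> simp

lemma invL_eq_sum (l : List Bool) :
    invL l = ∑ j ∈ Finset.range l.length,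
      (if l.getD j true = false then (l.take j).count true else 0) := by
  induction l with
  | nil => simp [invL]
  | cons b t ih =>
      rw [List.length_cons, Finset.sum_range_succ']
      simp only [List.getD_cons_succ, List.getD_cons_zero, List.take_succ_cons, List.take_zero,
        List.count_cons, List.count_nil, invL, ih]
      cases b
      · simp
      · simp only [if_true, Bool.false_eq_true]
        rw [show (∑ x ∈ Finset.range t.length,
            if t.getD x true = false then (t.take x).count true + (if (true == true) = true then 1 else 0) else 0)
          = (∑ x ∈ Finset.range t.length,
            if t.getD x true = false then (t.take x).count true + 1 else 0) from by simp,
          sum_ite_add (fun j => t.getD j true = false) (fun j => (t.take j).count true) (fun _ => 1),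
          ← count_false_eq_sum]
        simp


noncomputable def uF {L : ℕ} (w : Fin L → Bool) (j : Fin L) : ℕ :=
  (Finset.univ.filter (fun j' : Fin L => (j' : ℕ) < (j : ℕ) ∧ w j' = true)).card

lemma take_ofFn_all {L : ℕ} (w : Fin L → Bool) : (List.ofFn w).take L = List.ofFn w :=
  List.take_of_length_le (by simp)

lemma count_ofFn {L : ℕ} (w : Fin L → Bool) (b : Bool) :
    (List.ofFn w).count b = (Finset.univ.filter (fun j : Fin L => w j = b)).card := by
  have h := count_take_ofFn w b L le_rfl
  rw [take_ofFn_all] at h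
  rw [h]
  congr 1
  apply Finset.filter_congr
  intro j _
  simp [j.isLt]

lemma pOK_ofFn_iff {L : ℕ} (w : Fin L → Bool) : pOK (List.ofFn w) ↔ prefixCond L w := by
  constructor
  · intro h m hm
    have hm' : m ≤ L := by simpa [Nat.lt_succ_iff] using Finset.mem_range.1 hm
    rw [← count_take_ofFn w false m hm', ← count_take_ofFn w true m hm']
    exact h m
  · intro h m
    by_cases hm : m ≤ L
    · rw [count_take_ofFn w false m hm, count_take_ofFn w true m hm]
      exact h m (Finset.mem_range.2 (by omega))
    · have hL : (List.ofFn w).take m = (List.ofFn w).take L := by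
        rw [take_ofFn_all]
        exact List.take_of_length_le (by simp; omega)
      rw [hL, count_take_ofFn w false L le_rfl, count_take_ofFn w true L le_rfl]
      exact h L (Finset.mem_range.2 (by omega))

lemma isDyck_iff {n : ℕ} (w : Fin (2*n) → Bool) :
    isDyck n w ↔ dyckL (List.ofFn w) ∧ (List.ofFn w).count true = n := by
  have hlen : (List.ofFn w).length = 2*n := by simp
  have hcount := length_eq_counts (List.ofFn w)
  constructor
  · rintro ⟨hc, hp⟩
    have hT : (List.ofFn w).count true = n := by rw [count_ofFn]; exact hc
    refine ⟨⟨?_, (pOK_ofFn_iff w).2 hp⟩, hT⟩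
    omega
  · rintro ⟨⟨hbal, hp⟩, hT⟩
    refine ⟨?_, (pOK_ofFn_iff w).1 hp⟩
    rw [← count_ofFn]; exact hT

lemma card_false_filter {n : ℕ} (w : Fin (2*n) → Bool) (hw : isDyck n w) :
    (Finset.univ.filter (fun j : Fin (2*n) => w j = false)).card = n := by
  have h := (isDyck_iff w).1 hw
  have hlen : (List.ofFn w).length = 2*n := by simp
  have hcount := length_eq_counts (List.ofFn w)
  have hF : (List.ofFn w).count false = n := by
    have := h.1.1; have := h.2; omega
  rw [← count_ofFn]; exact hF

lemma uF_le {n : ℕ} (w : Fin (2*n) → Bool) (hw : isDyck n w) (j : Fin (2*n)) :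
    uF w j ≤ n := by
  have : uF w j ≤ (Finset.univ.filter (fun j' : Fin (2*n) => w j' = true)).card := by
    apply Finset.card_le_card
    intro j' hj'
    simp only [Finset.mem_filter, Finset.mem_univ, true_and] at hj' ⊢
    exact hj'.2
  rw [hw.1] at this
  exact this

lemma uF_mono {L : ℕ} (w : Fin L → Bool) {j j' : Fin L} (h : (j : ℕ) ≤ (j' : ℕ)) :
    uF w j ≤ uF w j' := by
  apply Finset.card_le_card
  intro k hk
  simp only [Finset.mem_filter, Finset.mem_univ, true_and] at hk ⊢
  exact ⟨by omega, hk.2⟩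

lemma dCount_le {n : ℕ} (w : Fin (2*n) → Bool) (hw : isDyck n w) (i : ℕ) (hi : 1 ≤ i) :
    dCount n w i ≤ i - 1 := by
  classical
  have hdef : dCount n w i
      = (Finset.univ.filter (fun j : Fin (2*n) => w j = false ∧ uF w j < i)).card := rfl
  rcases (Finset.univ.filter
      (fun j : Fin (2*n) => w j = false ∧ uF w j < i)).eq_empty_or_nonempty with hE | hNE
  · rw [hdef, hE]; simp
  · obtain ⟨js, hjsmem, hjsmax⟩ := (Finset.univ.filter
      (fun j : Fin (2*n) => w j = false ∧ uF w j < i)).exists_max_image (fun j => (j : ℕ)) hNE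
    obtain ⟨-, hjF, hjU⟩ := Finset.mem_filter.1 hjsmem
    have hSeq : (Finset.univ.filter (fun j : Fin (2*n) => w j = false ∧ uF w j < i))
        = Finset.univ.filter
        (fun j : Fin (2*n) => (j : ℕ) < (js : ℕ) + 1 ∧ w j = false) := by
      ext j
      simp only [Finset.mem_filter, Finset.mem_univ, true_and]
      constructor
      · rintro ⟨hf, hu⟩
        have := hjsmax j (Finset.mem_filter.2 ⟨Finset.mem_univ _, hf, hu⟩)
        exact ⟨by omega, hf⟩
      · rintro ⟨hlt, hf⟩
        refine ⟨hf, ?_⟩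
        have := uF_mono w (j := j) (j' := js) (by omega)
        omega
    have hT : (Finset.univ.filter
        (fun j : Fin (2*n) => (j : ℕ) < (js : ℕ) + 1 ∧ w j = true)).card = uF w js := by
      unfold uF
      congr 1
      ext j
      simp only [Finset.mem_filter, Finset.mem_univ, true_and]
      constructor
      · rintro ⟨hlt, ht⟩
        refine ⟨?_, ht⟩
        rcases Nat.lt_succ_iff_lt_or_eq.1 hlt with h' | h'
        · exact h'
        · exfalso
          have hj : j = js := Fin.ext h'
          rw [hj, hjF] at ht
          exact absurd ht (by simp)
      · rintro ⟨hlt, ht⟩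
        exact ⟨by omega, ht⟩
    have hp := hw.2 ((js : ℕ) + 1) (Finset.mem_range.2 (by have := js.isLt; omega))
    rw [hdef, hSeq]
    calc (Finset.univ.filter
        (fun j : Fin (2*n) => (j : ℕ) < (js : ℕ) + 1 ∧ w j = false)).card
        ≤ (Finset.univ.filter
        (fun j : Fin (2*n) => (j : ℕ) < (js : ℕ) + 1 ∧ w j = true)).card := hp
      _ = uF w js := hT
      _ ≤ i - 1 := by omega

lemma sum_dCount {n : ℕ} (w : Fin (2*n) → Bool) (hw : isDyck n w) :
    ∑ i ∈ Finset.Icc 1 n, dCount n w i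
      = ∑ j ∈ Finset.univ.filter (fun j : Fin (2*n) => w j = false), (n - uF w j) := by
  have h1 : ∀ i, dCount n w i = ∑ j ∈ Finset.univ.filter
      (fun j : Fin (2*n) => w j = false), (if uF w j < i then 1 else 0) := by
    intro i
    have h : dCount n w i = ((Finset.univ.filter (fun j : Fin (2*n) => w j = false)).filter
        (fun j => uF w j < i)).card := by
      rw [Finset.filter_filter]
      rfl
    rw [h, Finset.card_filter]
  rw [Finset.sum_congr rfl (fun i _ => h1 i), Finset.sum_comm]
  apply Finset.sum_congr rfl
  intro j hj
  have huj := uF_le w hw j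
  have h2 : ∑ i ∈ Finset.Icc 1 n, (if uF w j < i then 1 else 0)
      = ((Finset.Icc 1 n).filter (fun i => uF w j < i)).card := (Finset.card_filter _ _).symm
  rw [h2]
  have h3 : (Finset.Icc 1 n).filter (fun i => uF w j < i) = Finset.Icc (uF w j + 1) n := by
    ext i
    simp only [Finset.mem_filter, Finset.mem_Icc]
    omega
  rw [h3, Nat.card_Icc]
  omega

lemma sum_Icc_id_eq_gg (n : ℕ) : ∑ i ∈ Finset.Icc 1 n, i = gg n := by
  induction n with
  | zero => simp [gg]
  | succ n ih =>
      rw [Finset.sum_Icc_succ_top (by omega)]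
      unfold gg at ih ⊢
      rw [Finset.sum_range_succ]
      omega

lemma invL_ofFn_eq {n : ℕ} (w : Fin (2*n) → Bool) (hw : isDyck n w) :
    invL (List.ofFn w) = area n w + gg n := by
  have hI : invL (List.ofFn w)
      = ∑ j ∈ Finset.univ.filter (fun j : Fin (2*n) => w j = false), uF w j := by
    rw [invL_eq_sum]
    have hlen : (List.ofFn w).length = 2*n := by simp
    rw [hlen]
    rw [← Fin.sum_univ_eq_sum_range (fun j =>
      if (List.ofFn w).getD j true = false then ((List.ofFn w).take j).count true else 0) (2*n)]
    rw [Finset.sum_filter]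
    apply Finset.sum_congr rfl
    intro j _
    have hg : (List.ofFn w).getD (j : ℕ) true = w j := by
      rw [List.getD_eq_getElem?_getD]
      simp [List.getElem?_ofFn, List.ofFnNthVal, j.isLt]
    have hu : ((List.ofFn w).take (j : ℕ)).count true = uF w j := by
      rw [count_take_ofFn w true (j : ℕ) (le_of_lt j.isLt)]
      rfl
    rw [hg, hu]
  have hsplit : ∀ i ∈ Finset.Icc 1 n,
      (i - 1 - dCount n w i) + dCount n w i = i - 1 := by
    intro i hi
    have := dCount_le w hw i (Finset.mem_Icc.1 hi).1
    omega
  have h2 : area n w + ∑ i ∈ Finset.Icc 1 n, dCount n w i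
      = ∑ i ∈ Finset.Icc 1 n, (i - 1) := by
    unfold area
    rw [← Finset.sum_add_distrib]
    exact Finset.sum_congr rfl hsplit
  have hcard : (Finset.Icc 1 n).card = n := by rw [Nat.card_Icc]; omega
  have h5 : (∑ i ∈ Finset.Icc 1 n, (i-1)) + n = gg n := by
    rw [← sum_Icc_id_eq_gg n]
    calc (∑ i ∈ Finset.Icc 1 n, (i-1)) + n
        = ∑ i ∈ Finset.Icc 1 n, ((i-1) + 1) := by
          rw [Finset.sum_add_distrib, Finset.sum_const, hcard, smul_eq_mul, mul_one]
      _ = ∑ i ∈ Finset.Icc 1 n, i := Finset.sum_congr rfl (fun i hi => by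
          have := (Finset.mem_Icc.1 hi).1; omega)
  have h4 : (∑ j ∈ Finset.univ.filter (fun j : Fin (2*n) => w j = false), (n - uF w j))
      + (∑ j ∈ Finset.univ.filter (fun j : Fin (2*n) => w j = false), uF w j) = n * n := by
    rw [← Finset.sum_add_distrib]
    have : ∀ j ∈ Finset.univ.filter (fun j : Fin (2*n) => w j = false),
        (n - uF w j) + uF w j = n := by
      intro j _
      have := uF_le w hw j
      omega
    rw [Finset.sum_congr rfl this, Finset.sum_const, card_false_filter w hw, smul_eq_mul]
  have h6 := sum_dCount w hw
  have h7 := gg_two_mul n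
  have h8 : n * (n+1) = n*n + n := by ring
  omega

noncomputable def DF (n : ℕ) : Finset (List Bool) :=
  ((Finset.univ : Finset (Fin (2*n) → Bool)).image List.ofFn).filter dyckL

lemma mem_DF {n : ℕ} {l : List Bool} : l ∈ DF n ↔ l.length = 2*n ∧ dyckL l := by
  unfold DF
  rw [Finset.mem_filter, Finset.mem_image]
  constructor
  · rintro ⟨⟨w, -, rfl⟩, hd⟩
    exact ⟨by simp, hd⟩
  · rintro ⟨hlen, hd⟩
    refine ⟨⟨fun i : Fin (2*n) => l[(i : ℕ)]'(by omega), Finset.mem_univ _, ?_⟩, hd⟩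
    apply List.ext_getElem (by simp [hlen])
    intro i h1 h2
    simp [List.getElem_ofFn]

lemma exists_dyck_word {n : ℕ} {l : List Bool} (hl : l ∈ DF n) :
    ∃ w : Fin (2*n) → Bool, isDyck n w ∧ List.ofFn w = l := by
  obtain ⟨hlen, hd⟩ := mem_DF.1 hl
  have hcounts := length_eq_counts l
  have hT : l.count true = n := by
    have := hd.1
    omega
  refine ⟨fun i : Fin (2*n) => l[(i : ℕ)]'(by omega), ?_, ?_⟩
  · have hof : List.ofFn (fun i : Fin (2*n) => l[(i : ℕ)]'(by omega)) = l := by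
      apply List.ext_getElem (by simp [hlen])
      intro i h1 h2
      simp [List.getElem_ofFn]
    rw [isDyck_iff]
    rw [hof]
    exact ⟨hd, hT⟩
  · apply List.ext_getElem (by simp [hlen])
    intro i h1 h2
    simp [List.getElem_ofFn]

lemma DF_count_true {n : ℕ} {l : List Bool} (hl : l ∈ DF n) : l.count true = n := by
  obtain ⟨hlen, hd⟩ := mem_DF.1 hl
  have := length_eq_counts l
  have := hd.1
  omega

lemma DF_count_false {n : ℕ} {l : List Bool} (hl : l ∈ DF n) : l.count false = n := by
  obtain ⟨hlen, hd⟩ := mem_DF.1 hl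
  have := length_eq_counts l
  have := hd.1
  omega

lemma DF_invL_ge {n : ℕ} {l : List Bool} (hl : l ∈ DF n) : gg n ≤ invL l := by
  obtain ⟨w, hw, rfl⟩ := exists_dyck_word hl
  rw [invL_ofFn_eq w hw]
  omega

lemma DF_al {n : ℕ} {l : List Bool} (hl : l ∈ DF n) : al l = invL l - gg n := by
  unfold al
  rw [DF_count_true hl]

lemma dyckArea_eq (n : ℕ) : dyckArea n = ∑ l ∈ DF n, pv ^ al l := by
  unfold dyckArea
  apply Finset.sum_bij (i := fun (w : Fin (2*n) → Bool) (_ : w ∈ Finset.univ.filter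
    (fun w : Fin (2 * n) → Bool => isDyck n w)) => List.ofFn w)
  · intro w hw
    have hw' : isDyck n w := (Finset.mem_filter.1 hw).2
    rw [mem_DF]
    exact ⟨by simp, ((isDyck_iff w).1 hw').1⟩
  · intro w1 h1 w2 h2 h
    exact List.ofFn_injective h
  · intro l hl
    obtain ⟨w, hw, rfl⟩ := exists_dyck_word hl
    exact ⟨w, Finset.mem_filter.2 ⟨Finset.mem_univ _, hw⟩, rfl⟩
  · intro w hw
    have hw' : isDyck n w := (Finset.mem_filter.1 hw).2
    congr 1
    have h1 : (List.ofFn w).count true = n := ((isDyck_iff w).1 hw').2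
    unfold al
    rw [h1, invL_ofFn_eq w hw']
    omega

lemma exists_split (t : List Bool) (h : t.count true < t.count false) :
    ∃ l1 l2 : List Bool, t = l1 ++ false :: l2 ∧ l1.count true = l1.count false ∧ pOK l1 := by
  classical
  have hne : 1 ≤ t.length := by
    rcases t with _ | ⟨b, t'⟩
    · simp at h
    · simp
  have hex : ∃ m, ((t.take (m+1)).count true) < ((t.take (m+1)).count false) :=
    ⟨t.length - 1, by rw [show t.length - 1 + 1 = t.length by omega, List.take_length]; exact h⟩
  set m0 := Nat.find hex with hm0
  have hP := Nat.find_spec hex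
  have hmin : ∀ k, k < m0 → ¬ ((t.take (k+1)).count true < (t.take (k+1)).count false) :=
    fun k hk => Nat.find_min hex hk
  have hm0len : m0 < t.length := by
    by_contra h'
    push_neg at h'
    rcases Nat.lt_or_ge (t.length - 1) m0 with hlt | hge
    · exact hmin _ hlt (by rw [show t.length - 1 + 1 = t.length by omega, List.take_length]; exact h)
    · omega
  have hPok : pOK (t.take m0) := by
    intro m
    rw [List.take_take]
    rcases Nat.eq_zero_or_pos (min m m0) with h0 | hpos
    · rw [h0]; simp
    · have hk : min m m0 - 1 < m0 := by omega
      have := hmin _ hk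
      rw [show min m m0 - 1 + 1 = min m m0 by omega] at this
      omega
  have hbal0 : (t.take m0).count false ≤ (t.take m0).count true := by
    have := hPok (t.take m0).length
    rw [List.take_length] at this
    exact this
  have htake : t.take (m0+1) = t.take m0 ++ [t[m0]] := by
    rw [List.take_succ]
    simp [List.getElem?_eq_getElem hm0len]
  have hx : t[m0] = false := by
    rw [htake] at hP
    cases hxv : t[m0] <;> rw [hxv] at hP <;>
      simp [List.count_append] at hP <;> omega
  have hbal : (t.take m0).count true = (t.take m0).count false := by
    rw [htake, hx] at hP
    simp [List.count_append] at hP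
    omega
  refine ⟨t.take m0, t.drop (m0+1), ?_, hbal, hPok⟩
  conv_lhs => rw [← List.take_append_drop m0 t]
  rw [List.drop_eq_getElem_cons hm0len, hx]

lemma split_unique_len {l1 l2 l1' l2' : List Bool}
    (h1 : l1.count true = l1.count false)
    (hp' : pOK l1')
    (h : l1 ++ false :: l2 = l1' ++ false :: l2') : ¬ (l1.length < l1'.length) := by
  intro hlt
  have htk := congrArg (List.take (l1.length + 1)) h
  have hL : (l1 ++ false :: l2).take (l1.length + 1) = l1 ++ [false] := by
    rw [List.take_append]
    simp
  rw [hL, List.take_append_of_le_length (by omega)] at htk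
  have := hp' (l1.length + 1)
  rw [← htk] at this
  simp [List.count_append] at this
  omega

lemma split_unique {l1 l2 l1' l2' : List Bool}
    (h1 : l1.count true = l1.count false) (h1' : l1'.count true = l1'.count false)
    (hp : pOK l1) (hp' : pOK l1')
    (h : l1 ++ false :: l2 = l1' ++ false :: l2') : l1 = l1' ∧ l2 = l2' := by
  have hlen : l1.length = l1'.length := by
    have hA := split_unique_len h1 hp' h
    have hB := split_unique_len h1' hp h.symm
    omega
  obtain ⟨e1, e2⟩ := List.append_inj h hlen
  refine ⟨e1, ?_⟩
  injection e2

lemma compound_counts {l1 l2 : List Bool} :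
    (true :: l1 ++ false :: l2).count true = l1.count true + l2.count true + 1 ∧
    (true :: l1 ++ false :: l2).count false = l1.count false + l2.count false + 1 := by
  constructor <;> simp [List.count_cons, List.count_append] <;> omega

lemma compound_mem {b e : ℕ} {l1 l2 : List Bool} (h1 : l1 ∈ DF b) (h2 : l2 ∈ DF e) :
    (true :: l1 ++ false :: l2) ∈ DF (b + e + 1) := by
  have hm1 := mem_DF.1 h1
  have hm2 := mem_DF.1 h2
  have hlen1 := hm1.1
  have hbal1 := hm1.2.1
  have hp1 := hm1.2.2
  have hlen2 := hm2.1
  have hbal2 := hm2.2.1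
  have hp2 := hm2.2.2
  have hb : l1.count true = b := DF_count_true h1
  have hbf : l1.count false = b := DF_count_false h1
  have he : l2.count true = e := DF_count_true h2
  have hef : l2.count false = e := DF_count_false h2
  rw [mem_DF]
  refine ⟨by simp [hlen1, hlen2]; omega, ?_, ?_⟩
  · obtain ⟨hT, hF⟩ := compound_counts (l1 := l1) (l2 := l2)
    rw [hT, hF]; omega
  · intro m
    rcases m with _ | k
    · simp
    · rw [show (true :: l1 ++ false :: l2) = true :: (l1 ++ false :: l2) from rfl,
        List.take_succ_cons]
      simp only [List.count_cons]
      rcases le_or_gt k l1.length with hk | hk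
      · rw [List.take_append_of_le_length hk]
        have := hp1 k
        simp
        omega
      · have hks : k = l1.length + (k - l1.length) := by omega
        rw [hks, List.take_length_add_append]
        have hkk : 1 ≤ k - l1.length := by omega
        have h3 : (false :: l2).take (k - l1.length)
            = false :: l2.take (k - l1.length - 1) := by
          rw [show k - l1.length = (k - l1.length - 1) + 1 by omega, List.take_succ_cons]
          simp
        rw [h3]
        have := hp2 (k - l1.length - 1)
        simp [List.count_append, List.count_cons]
        omega

lemma compound_al {b e : ℕ} {l1 l2 : List Bool} (h1 : l1 ∈ DF b) (h2 : l2 ∈ DF e) :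
    al (true :: l1 ++ false :: l2) = al l1 + al l2 + b := by
  have hb : l1.count true = b := DF_count_true h1
  have hbf : l1.count false = b := DF_count_false h1
  have he : l2.count true = e := DF_count_true h2
  have hef : l2.count false = e := DF_count_false h2
  have hinv : invL (true :: l1 ++ false :: l2)
      = invL l1 + invL l2 + b * e + 2*b + e + 1 := by
    have e1 : invL (true :: (l1 ++ false :: l2))
        = invL (l1 ++ false :: l2) + (l1 ++ false :: l2).count false := by
      simp [invL]
    have e2 : invL (false :: l2) = invL l2 := by simp [invL]
    rw [show (true :: l1 ++ false :: l2) = true :: (l1 ++ false :: l2) from rfl, e1,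
      invL_append, e2]
    have c1 : (false :: l2).count false = e + 1 := by simp [List.count_cons, hef]
    have c2 : (l1 ++ false :: l2).count false = b + (e + 1) := by
      simp [List.count_append, List.count_cons, hbf, hef]
    rw [c1, c2, hb]
    have : b*(e+1) = b*e + b := by ring
    omega
  have hge1 := DF_invL_ge h1
  have hge2 := DF_invL_ge h2
  have hmem := compound_mem h1 h2
  have hTT : (true :: l1 ++ false :: l2).count true = b + e + 1 := by
    obtain ⟨hT, -⟩ := compound_counts (l1 := l1) (l2 := l2)
    omega
  unfold al
  rw [hTT, hb, he, hinv, gg_add]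
  omega

lemma DF_succ_decomp {n : ℕ} {l : List Bool} (hl : l ∈ DF (n+1)) :
    ∃ (b e : ℕ) (l1 l2 : List Bool), b + e = n ∧ l1 ∈ DF b ∧ l2 ∈ DF e ∧
      l = true :: l1 ++ false :: l2 := by
  have hm := mem_DF.1 hl
  have hlen := hm.1
  have hbal := hm.2.1
  have hp := hm.2.2
  have hT : l.count true = n+1 := DF_count_true hl
  have hF : l.count false = n+1 := DF_count_false hl
  rcases l with _ | ⟨x, t⟩
  · simp at hlen
  · have hx : x = true := by
      have := hp 1
      rcases x with _ | _
      · simp [List.count_cons] at this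
      · rfl
    subst hx
    have hTt : t.count true = n := by simp [List.count_cons] at hT; omega
    have hFt : t.count false = n+1 := by simpa [List.count_cons] using hF
    obtain ⟨l1, l2, heq, hbal1, hp1⟩ := exists_split t (by omega)
    have hc := congrArg (List.count true) heq
    have hcf := congrArg (List.count false) heq
    simp [List.count_append, List.count_cons] at hc hcf
    set b := l1.count true with hbdef
    have hble : b ≤ n := by omega
    have h1 : l1 ∈ DF b := by
      rw [mem_DF]
      refine ⟨?_, by omega, hp1⟩
      have := length_eq_counts l1; omega
    have hTl2 : l2.count true = n - b := by omega
    have hFl2 : l2.count false = n - b := by omega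
    have hp2 : pOK l2 := by
      intro m
      have hstep := hp (l1.length + m + 2)
      have htk : (true :: t).take (l1.length + m + 2)
          = true :: (l1 ++ false :: l2.take m) := by
        rw [show l1.length + m + 2 = (l1.length + (m+1)) + 1 by omega, List.take_succ_cons]
        rw [heq, List.take_length_add_append, List.take_succ_cons]
      rw [htk] at hstep
      simp [List.count_append, List.count_cons] at hstep
      omega
    have h2 : l2 ∈ DF (n - b) := by
      rw [mem_DF]
      refine ⟨?_, ?_, hp2⟩
      · have := length_eq_counts l2; omega
      · omega
    exact ⟨b, n - b, l1, l2, by omega, h1, h2, by rw [heq, List.cons_append]⟩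

lemma dyckArea_zero : dyckArea 0 = 1 := by
  rw [dyckArea_eq]
  have : DF 0 = {([] : List Bool)} := by
    ext l
    rw [mem_DF]
    constructor
    · rintro ⟨hlen, -⟩
      simp at hlen ⊢
      exact hlen
    · rintro h
      simp at h
      subst h
      refine ⟨by simp, by simp [dyckL], fun m => by simp⟩
  rw [this]
  simp [al, invL, gg]

lemma dyckArea_succ (n : ℕ) :
    dyckArea (n+1) = ∑ q ∈ Finset.HasAntidiagonal.antidiagonal n, pv ^ q.1 * dyckArea q.1 * dyckArea q.2 := by
  have key : ∑ x ∈ (Finset.HasAntidiagonal.antidiagonal n).sigma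
        (fun q : ℕ × ℕ => DF q.1 ×ˢ DF q.2),
      pv ^ (x.1.1 + al x.2.1 + al x.2.2) = ∑ l ∈ DF (n+1), pv ^ al l := by
    apply Finset.sum_bij (i := fun x _ => true :: x.2.1 ++ false :: x.2.2)
    · rintro ⟨⟨b, e⟩, l1, l2⟩ hx
      simp only [Finset.mem_sigma, Finset.mem_product, Finset.HasAntidiagonal.mem_antidiagonal] at hx
      obtain ⟨hbe, h1, h2⟩ := hx
      have := compound_mem h1 h2
      rwa [show b + e + 1 = n + 1 by omega] at this
    · rintro ⟨⟨b, e⟩, l1, l2⟩ hx ⟨⟨b', e'⟩, l1', l2'⟩ hx' heq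
      simp only [Finset.mem_sigma, Finset.mem_product, Finset.HasAntidiagonal.mem_antidiagonal] at hx hx'
      obtain ⟨hbe, h1, h2⟩ := hx
      obtain ⟨hbe', h1', h2'⟩ := hx'
      simp only [List.cons_append, List.cons.injEq, true_and] at heq
      obtain ⟨e1, e2⟩ := split_unique (mem_DF.1 h1).2.1 (mem_DF.1 h1').2.1
        (mem_DF.1 h1).2.2 (mem_DF.1 h1').2.2 heq
      have hbb : b = b' := by
        rw [← DF_count_true h1, ← DF_count_true h1', e1]
      have hee : e = e' := by
        rw [← DF_count_true h2, ← DF_count_true h2', e2]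
      subst e1; subst e2; subst hbb; subst hee
      rfl
    · intro l hl
      obtain ⟨b, e, l1, l2, hbe, h1, h2, rfl⟩ := DF_succ_decomp hl
      refine ⟨⟨(b, e), (l1, l2)⟩, ?_, rfl⟩
      simp only [Finset.mem_sigma, Finset.mem_product, Finset.HasAntidiagonal.mem_antidiagonal]
      exact ⟨hbe, h1, h2⟩
    · rintro ⟨⟨b, e⟩, l1, l2⟩ hx
      simp only [Finset.mem_sigma, Finset.mem_product, Finset.HasAntidiagonal.mem_antidiagonal] at hx
      obtain ⟨hbe, h1, h2⟩ := hx
      dsimp only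
      rw [compound_al h1 h2]
      congr 1
      omega
  have expand : ∀ q : ℕ × ℕ, ∑ x ∈ DF q.1 ×ˢ DF q.2, pv ^ (q.1 + al x.1 + al x.2)
      = pv ^ q.1 * dyckArea q.1 * dyckArea q.2 := by
    intro q
    rw [Finset.sum_product, dyckArea_eq q.1, dyckArea_eq q.2, mul_assoc,
      Finset.sum_mul_sum, Finset.mul_sum]
    apply Finset.sum_congr rfl
    intro l1 _
    rw [Finset.mul_sum]
    apply Finset.sum_congr rfl
    intro l2 _
    dsimp only
    rw [pow_add, pow_add]
    ring
  rw [dyckArea_eq (n+1), ← key, Finset.sum_sigma]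
  apply Finset.sum_congr rfl
  intro q hq
  exact expand q

noncomputable def aa (n : ℕ) : K2 :=
  (-1 : K2) ^ n * pv ^ (n ^ 2) * yv ^ (2 * n) / ∏ i ∈ Finset.range n, (1 - pv ^ (i + 1))

lemma coeff_Aser (n : ℕ) : PowerSeries.coeff n Aser = aa n := by
  simp [Aser, aa, PowerSeries.coeff_mk]

lemma pv_ne : pv ≠ 0 := by
  unfold pv
  intro h
  apply RatFunc.X_ne_zero (K := ℚ)
  have h' : (RatFunc.C : RatFunc ℚ →+* K2) RatFunc.X = RatFunc.C 0 := by simpa using h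
  exact RingHom.injective _ h'

lemma yv_ne : yv ≠ 0 := RatFunc.X_ne_zero

lemma one_sub_pv_pow_ne (k : ℕ) : (1 : K2) - pv ^ (k + 1) ≠ 0 := by
  intro h
  have h1 : pv ^ (k+1) = 1 := by
    have := sub_eq_zero.1 h
    exact this.symm
  unfold pv at h1
  rw [← map_pow, ← map_one (RatFunc.C (K := RatFunc ℚ))] at h1
  have h2 : (RatFunc.X : RatFunc ℚ) ^ (k+1) = 1 := RingHom.injective RatFunc.C h1
  rw [← RatFunc.algebraMap_X (K := ℚ), ← map_pow,
    ← map_one (algebraMap (Polynomial ℚ) (RatFunc ℚ))] at h2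
  have h3 : (Polynomial.X : Polynomial ℚ) ^ (k+1) = 1 := RatFunc.algebraMap_injective ℚ h2
  have h4 := congrArg Polynomial.natDegree h3
  rw [Polynomial.natDegree_X_pow, Polynomial.natDegree_one] at h4
  omega

lemma prod_ne (n : ℕ) : (∏ i ∈ Finset.range n, ((1 : K2) - pv ^ (i + 1))) ≠ 0 :=
  Finset.prod_ne_zero_iff.2 fun i _ => one_sub_pv_pow_ne i

lemma aRec (n : ℕ) :
    aa (n+1) + (pv * yv^2) * pv^(2*n) * aa n = pv^(n+1) * aa (n+1) := by
  unfold aa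
  rw [Finset.prod_range_succ]
  rw [show (n+1)^2 = n^2 + (2*n+1) by ring, show 2*(n+1) = 2*n + 2 by ring]
  have h1 := prod_ne n
  have h2 := one_sub_pv_pow_ne n
  field_simp
  ring

noncomputable def dd (n : ℕ) : K2 := (pv * yv ^ 2) ^ n * dyckArea n

noncomputable def Dser : PowerSeries K2 := PowerSeries.mk dd

lemma dd_zero : dd 0 = 1 := by simp [dd, dyckArea_zero]

lemma aa_zero : aa 0 = 1 := by simp [aa]

lemma dd_succ (n : ℕ) : dd (n+1)
    = (pv * yv^2) * ∑ q ∈ Finset.HasAntidiagonal.antidiagonal n, (pv ^ q.1 * dd q.1) * dd q.2 := by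
  unfold dd
  rw [dyckArea_succ, Finset.mul_sum, Finset.mul_sum]
  apply Finset.sum_congr rfl
  intro q hq
  have hq' : q.1 + q.2 = n := Finset.HasAntidiagonal.mem_antidiagonal.1 hq
  rw [show (pv*yv^2)^(n+1) = (pv*yv^2) * ((pv*yv^2)^q.1 * (pv*yv^2)^q.2) by
    rw [← pow_add, hq']; ring]
  ring

lemma coeff_Dser (n : ℕ) : PowerSeries.coeff n Dser = dd n := by
  simp [Dser, PowerSeries.coeff_mk]

lemma coeff_AD (n : ℕ) : PowerSeries.coeff n (Aser * Dser)
    = ∑ q ∈ Finset.HasAntidiagonal.antidiagonal n, aa q.1 * dd q.2 := by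
  rw [PowerSeries.coeff_mul]
  apply Finset.sum_congr rfl
  intro q hq
  rw [coeff_Aser, coeff_Dser]

lemma coeff_ED (j : ℕ) : PowerSeries.coeff j (PowerSeries.rescale pv Dser * Dser)
    = ∑ q ∈ Finset.HasAntidiagonal.antidiagonal j, (pv ^ q.1 * dd q.1) * dd q.2 := by
  rw [PowerSeries.coeff_mul]
  apply Finset.sum_congr rfl
  intro q hq
  rw [PowerSeries.coeff_rescale, coeff_Dser, coeff_Dser]

lemma MC : ∀ n : ℕ, PowerSeries.coeff n (Aser * Dser) = pv ^ n * aa n := by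
  intro n
  induction n using Nat.strong_induction_on with
  | _ n ih =>
    match n, ih with
    | 0, _ => rw [coeff_AD]; simp [Finset.Nat.antidiagonal_zero, aa_zero, dd_zero]
    | (n+1), ih =>
      rw [coeff_AD, Finset.Nat.sum_antidiagonal_succ']
      have hsum : ∑ q ∈ Finset.HasAntidiagonal.antidiagonal n, aa q.1 * dd (q.2 + 1)
          = (pv * yv^2) * (PowerSeries.coeff n
              (PowerSeries.rescale pv Dser * (Aser * Dser))) := by
        have h1 : ∀ q ∈ Finset.HasAntidiagonal.antidiagonal n, aa q.1 * dd (q.2 + 1)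
            = (pv * yv^2) * (aa q.1 * PowerSeries.coeff q.2
                (PowerSeries.rescale pv Dser * Dser)) := by
          intro q hq
          rw [dd_succ, coeff_ED]
          ring
        rw [Finset.sum_congr rfl h1, ← Finset.mul_sum]
        congr 1
        have h2 : PowerSeries.coeff n (Aser * (PowerSeries.rescale pv Dser * Dser))
            = ∑ q ∈ Finset.HasAntidiagonal.antidiagonal n, aa q.1 * PowerSeries.coeff q.2
                (PowerSeries.rescale pv Dser * Dser) := by
          rw [PowerSeries.coeff_mul]
          exact Finset.sum_congr rfl fun q _ => by rw [coeff_Aser]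
        rw [← h2, mul_left_comm]
      rw [hsum]
      have h3 : PowerSeries.coeff n (PowerSeries.rescale pv Dser * (Aser * Dser))
          = ∑ q ∈ Finset.HasAntidiagonal.antidiagonal n, (pv ^ q.1 * dd q.1)
              * (pv ^ q.2 * aa q.2) := by
        rw [PowerSeries.coeff_mul]
        apply Finset.sum_congr rfl
        intro q hq
        rw [PowerSeries.coeff_rescale, coeff_Dser]
        congr 1
        exact ih q.2 (by have := Finset.HasAntidiagonal.mem_antidiagonal.1 hq; omega)
      rw [h3]
      have h4 : ∑ q ∈ Finset.HasAntidiagonal.antidiagonal n, (pv ^ q.1 * dd q.1) * (pv ^ q.2 * aa q.2)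
          = pv ^ n * ∑ q ∈ Finset.HasAntidiagonal.antidiagonal n, dd q.1 * aa q.2 := by
        rw [Finset.mul_sum]
        apply Finset.sum_congr rfl
        intro q hq
        have hq' : q.1 + q.2 = n := Finset.HasAntidiagonal.mem_antidiagonal.1 hq
        rw [show pv ^ n = pv ^ q.1 * pv ^ q.2 by rw [← pow_add, hq']]
        ring
      have h5 : ∑ q ∈ Finset.HasAntidiagonal.antidiagonal n, dd q.1 * aa q.2
          = pv ^ n * aa n := by
        have hcomm : ∑ q ∈ Finset.HasAntidiagonal.antidiagonal n, dd q.1 * aa q.2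
            = PowerSeries.coeff n (Aser * Dser) := by
          rw [mul_comm Aser Dser, PowerSeries.coeff_mul]
          exact Finset.sum_congr rfl fun q _ => by rw [coeff_Aser, coeff_Dser]
        rw [hcomm]
        exact ih n (by omega)
      rw [h4, h5, dd_zero, mul_one]
      have := aRec n
      calc aa (n+1) + pv * yv^2 * (pv ^ n * (pv ^ n * aa n))
          = aa (n+1) + (pv * yv^2) * pv^(2*n) * aa n := by
            rw [show 2*n = n + n by omega, pow_add]; ring
        _ = pv^(n+1) * aa (n+1) := aRec n

/-- `A(x) · Σ_{n≥0} (p·y²)^n c_n(p) x^n = A(p·x)`, i.e. `A(p·x)/A(x)` is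
the area generating function of Dyck paths. -/
theorem stmt_10 :
    Aser * PowerSeries.mk (fun n => (pv * yv ^ 2) ^ n * dyckArea n) =
      PowerSeries.rescale pv Aser := by
  have hD : PowerSeries.mk (fun n => (pv * yv ^ 2) ^ n * dyckArea n) = Dser := rfl
  rw [hD]
  ext n
  rw [MC n, PowerSeries.coeff_rescale, coeff_Aser]
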